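/- Let W be a Coxeter group and let t₁·t₂·…·t_l be a factorisation of the identity element of W into quasireflections. Then l is even, and the factorisation is Hurwitz equivalent to a factorisation t′₁·t′₂·…·t′_l in which t′_{2i−1} = t′_{2i} for every i. -/

import Mathlib

/-- A Hurwitz move on a tuple of group elements: an adjacent pair `(f, g)` is replaced
either by `(g, g⁻¹ f g)` or by `(f g f⁻¹, f)`; the remaining factors are unchanged. -/
def HurwitzMove {G : Type*} [Group G] (l l' : List G) : Prop :=
  ∃ (a : List G) (f g : G) (b : List G),
    l = a ++ [f, g] ++ b ∧
      (l' = a ++ [g, g⁻¹ * f * g] ++ b ∨ l' = a ++ [f * g * f⁻¹, f] ++ b)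

/-- Hurwitz equivalence: the equivalence relation generated by Hurwitz moves. -/
def HurwitzEquiv {G : Type*} [Group G] : List G → List G → Prop :=
  Relation.EqvGen HurwitzMove

namespace HurwitzCox

open List

variable {B : Type*} {W : Type*} [Group W] {M : CoxeterMatrix B} (cs : CoxeterSystem M W)
variable [DecidableEq W]

local prefix:100 "ℓ" => cs.length
local prefix:100 "π" => cs.wordProd
local prefix:100 "ris" => cs.rightInvSeq

theorem ris_cons (i : B) (ω : List B) :
    cs.rightInvSeq (i :: ω) = ((π ω)⁻¹ * cs.simple i * π ω) :: cs.rightInvSeq ω := rfl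

/-- The sign-flipping involutive map attached to a simple generator. -/
def sgnFun (i : B) : W × ℤˣ → W × ℤˣ :=
  fun p => (cs.simple i * p.1 * cs.simple i, if p.1 = cs.simple i then -p.2 else p.2)

theorem sgnFun_involutive (i : B) : Function.Involutive (sgnFun cs i) := by
  rintro ⟨w, ε⟩
  have hcancel : ∀ u : W, cs.simple i * (cs.simple i * u * cs.simple i) * cs.simple i = u := by
    intro u
    rw [show cs.simple i * u * cs.simple i = cs.simple i * (u * cs.simple i) from by
      rw [mul_assoc], cs.simple_mul_simple_cancel_left, cs.simple_mul_simple_cancel_right]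
  have h2 : cs.simple i * w * cs.simple i = cs.simple i ↔ w = cs.simple i := by
    constructor
    · intro h
      have := congrArg (fun z => cs.simple i * z * cs.simple i) h
      try simp only at this
      rw [hcancel] at this
      rw [this, show cs.simple i * cs.simple i * cs.simple i
        = cs.simple i * cs.simple i * cs.simple i from rfl]
      rw [cs.simple_mul_simple_self, one_mul]
    · rintro rfl
      rw [cs.simple_mul_simple_self, one_mul]
  simp only [sgnFun]
  rw [if_congr h2 rfl rfl]
  by_cases hw : w = cs.simple i
  · simp [hw, hcancel]
  · simp [hw, hcancel]

/-- The sign-flipping permutation attached to a simple generator. -/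
def sgnPerm (i : B) : Equiv.Perm (W × ℤˣ) := (sgnFun_involutive cs i).toPerm

theorem sgnPerm_apply (i : B) (w : W) (ε : ℤˣ) :
    sgnPerm cs i (w, ε) = (cs.simple i * w * cs.simple i,
      if w = cs.simple i then -ε else ε) := rfl

theorem prod_map_sgnPerm (ω : List B) (t : W) (ε : ℤˣ) :
    ((ω.map (sgnPerm cs)).prod) (t, ε) =
      (π ω * t * (π ω)⁻¹, (-1 : ℤˣ) ^ (List.count t (ris ω)) * ε) := by
  induction ω generalizing ε with
  | nil => simp
  | cons i ω ih =>
    rw [map_cons, prod_cons, Equiv.Perm.mul_apply, ih, sgnPerm_apply, ris_cons,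
      List.count_cons]
    have hcond : (π ω * t * (π ω)⁻¹ = cs.simple i) ↔ ((π ω)⁻¹ * cs.simple i * π ω = t) := by
      constructor
      · intro h; rw [← h]; group
      · intro h; rw [← h]; group
    rw [cs.wordProd_cons]
    by_cases hc : (π ω)⁻¹ * cs.simple i * π ω = t
    · rw [if_pos (hcond.mpr hc), if_pos (by simp [hc])]
      simp only [Prod.mk.injEq]
      refine ⟨by rw [mul_inv_rev, cs.inv_simple]; group, ?_⟩
      rw [pow_succ]
      simp [mul_assoc, mul_comm, neg_mul, mul_neg]
    · rw [if_neg (fun h => hc (hcond.mp h)), if_neg (by simp [hc])]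
      simp only [Prod.mk.injEq, add_zero]
      exact ⟨by rw [mul_inv_rev, cs.inv_simple]; group, trivial⟩


section AltWord

open CoxeterSystem

theorem head_entry (i i' : B) (n : ℕ) :
    (π (alternatingWord i i' n))⁻¹ * cs.simple (if Even n then i' else i)
      * π (alternatingWord i i' n)
      = (cs.simple i' * cs.simple i) ^ n * cs.simple i' := by
  set x := cs.simple i with hx
  set y := cs.simple i' with hy
  have hsc : SemiconjBy y (x * y) (y * x) := by
    unfold SemiconjBy; group
  have hpow : ∀ k : ℕ, y * (x * y) ^ k = (y * x) ^ k * y := fun k => (hsc.pow_right k)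
  have hinv : ∀ k : ℕ, ((x * y) ^ k)⁻¹ = (y * x) ^ k := by
    intro k
    rw [← inv_pow, mul_inv_rev, hx, hy, cs.inv_simple, cs.inv_simple]
  rw [cs.prod_alternatingWord_eq_mul_pow]
  by_cases h : Even n
  · rw [if_pos h, if_pos h, one_mul, hinv, mul_assoc, hpow, ← mul_assoc, ← pow_add]
    congr 2
    rw [Nat.even_iff] at h
    omega
  · rw [if_neg h, if_neg h, mul_inv_rev, hinv]
    rw [← hy, cs.inv_simple, ← hx]
    set k := n / 2 with hk
    calc (y * x) ^ k * y * x * (y * (x * y) ^ k)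
        = (y * x) ^ k * (y * x) * (y * (x * y) ^ k) := by rw [mul_assoc ((y*x)^k) y x]
      _ = (y * x) ^ (k + 1) * ((y * x) ^ k * y) := by rw [pow_succ, hpow]
      _ = (y * x) ^ (k + 1 + k) * y := by rw [← mul_assoc, ← pow_add]
      _ = (y * x) ^ n * y := by
          congr 2
          rw [Nat.even_iff] at h
          omega

theorem ris_alternatingWord (i i' : B) (n : ℕ) :
    cs.rightInvSeq (alternatingWord i i' n) =
      (List.range n).map
        (fun k => (cs.simple i' * cs.simple i) ^ (n - 1 - k) * cs.simple i') := by
  induction n with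
  | zero => simp [alternatingWord]
  | succ n ih =>
    rw [alternatingWord_succ', ris_cons, ih, List.range_succ_eq_map, List.map_cons,
      head_entry cs i i' n, List.map_map]
    congr 1
    symm
    apply List.map_congr_left
    intro k _
    simp only [Function.comp_apply]
    congr 2
    omega

theorem count_ris_alt_even (i i' : B) (t : W) :
    Even (List.count t (cs.rightInvSeq (alternatingWord i i' (2 * M i i')))) := by
  rw [ris_alternatingWord, two_mul, List.range_add, List.map_append, List.count_append]
  have heq : (List.map (fun x => M i i' + x) (List.range (M i i'))).map
        (fun k => (cs.simple i' * cs.simple i) ^ (M i i' + M i i' - 1 - k) * cs.simple i')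
      = (List.range (M i i')).map
        (fun k => (cs.simple i' * cs.simple i) ^ (M i i' + M i i' - 1 - k) * cs.simple i') := by
    rw [List.map_map]
    apply List.map_congr_left
    intro k hk
    rw [List.mem_range] at hk
    simp only [Function.comp_apply]
    have h1 : M i i' + M i i' - 1 - (M i i' + k) = M i i' - 1 - k := by omega
    have h2 : M i i' + M i i' - 1 - k = (M i i' - 1 - k) + M i i' := by omega
    rw [h1, h2, pow_add, cs.simple_mul_simple_pow' i i', mul_one]
  rw [heq]
  exact ⟨_, rfl⟩

theorem prod_map_alt {G : Type*} [Monoid G] (g : B → G) (i i' : B) (m : ℕ) :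
    ((alternatingWord i i' (2 * m)).map g).prod = (g i * g i') ^ m := by
  induction m with
  | zero => simp [alternatingWord]
  | succ m ih =>
    have h2 : 2 * (m + 1) = (2 * m + 1) + 1 := by ring
    rw [h2, alternatingWord_succ', alternatingWord_succ']
    rw [if_neg (by simp [Nat.even_add_one, parity_simps]), if_pos (by simp [parity_simps])]
    rw [List.map_cons, List.map_cons, List.prod_cons, List.prod_cons, ih, pow_succ',
      mul_assoc]

theorem sgnPerm_liftable : CoxeterMatrix.IsLiftable M (sgnPerm cs) := by
  intro i i'
  rw [← prod_map_alt (sgnPerm cs) i i' (M i i')]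
  apply Equiv.ext
  rintro ⟨t, ε⟩
  rw [prod_map_sgnPerm]
  have hπ : π (alternatingWord i i' (2 * M i i')) = 1 := by
    rw [cs.prod_alternatingWord_eq_mul_pow, if_pos (even_two_mul _), one_mul,
      Nat.mul_div_cancel_left _ (by norm_num : 0 < 2), cs.simple_mul_simple_pow]
  rw [hπ, (count_ris_alt_even cs i i' t).neg_one_pow]
  simp [Equiv.Perm.one_apply]

end AltWord

/-- The sign representation used to derive the strong exchange property. -/
def sgnRep : W →* Equiv.Perm (W × ℤˣ) := cs.lift ⟨sgnPerm cs, sgnPerm_liftable cs⟩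

theorem sgnRep_wordProd (ω : List B) : sgnRep cs (π ω) = (ω.map (sgnPerm cs)).prod := by
  unfold CoxeterSystem.wordProd
  rw [MonoidHom.map_list_prod, List.map_map]
  congr 1
  exact List.map_congr_left (fun k _ => cs.lift_apply_simple (sgnPerm_liftable cs) k)

theorem count_ris_parity {ω ω' : List B} (h : π ω = π ω') (t : W) :
    (-1 : ℤˣ) ^ (List.count t (ris ω)) = (-1) ^ (List.count t (ris ω')) := by
  have h1 := prod_map_sgnPerm cs ω t 1
  have h2 := prod_map_sgnPerm cs ω' t 1
  have h3 : (ω.map (sgnPerm cs)).prod = (ω'.map (sgnPerm cs)).prod := by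
    rw [← sgnRep_wordProd, ← sgnRep_wordProd, h]
  rw [h3, h2] at h1
  have := congrArg Prod.snd h1
  simpa using this.symm


section StrongExchange

theorem grp_aux1 {G : Type*} [Group G] {a u : G} (ha : a * a = 1) :
    a * u * a * u * a = a * u * a ↔ u = a := by
  constructor
  · intro h
    simp only [mul_assoc] at h
    have h2 := mul_left_cancel h
    have h3 := mul_left_cancel h2
    have h4 : a * (u * a) = a * 1 := by rw [h3, mul_one]
    have h5 := mul_left_cancel h4
    have ha' : a⁻¹ = a := inv_eq_of_mul_eq_one_right ha
    rw [eq_inv_of_mul_eq_one_left h5]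
    exact ha' 
  · rintro rfl
    simp [mul_assoc, ha]

theorem grp_aux2 {G : Type*} [Group G] {a u : G} (ha : a * a = 1) :
    a = a * u * a ↔ u = a := by
  constructor
  · intro h
    have h4 : a * 1 = a * (u * a) := by rw [mul_one, ← mul_assoc, ← h]
    have h5 := mul_left_cancel h4
    have ha' : a⁻¹ = a := inv_eq_of_mul_eq_one_right ha
    rw [eq_inv_of_mul_eq_one_left h5.symm]
    exact ha' 
  · rintro rfl
    rw [ha, one_mul]

theorem ris_append (A Bw : List B) :
    cs.rightInvSeq (A ++ Bw) =
      (cs.rightInvSeq A).map (fun u => (π Bw)⁻¹ * u * π Bw) ++ cs.rightInvSeq Bw := by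
  induction A with
  | nil => simp
  | cons i A ih =>
    rw [List.cons_append, ris_cons, ris_cons, ih, List.map_cons, List.cons_append]
    congr 1
    rw [cs.wordProd_append, mul_inv_rev]
    group

theorem count_ris_palindrome_odd (ρ : List B) (j : B) :
    Odd (List.count (π ρ * cs.simple j * (π ρ)⁻¹)
      (cs.rightInvSeq (ρ ++ [j] ++ ρ.reverse))) := by
  induction ρ with
  | nil => simp
  | cons k ρ ih =>
    set t₀ := π ρ * cs.simple j * (π ρ)⁻¹ with ht₀
    have hreflt₀ : cs.IsReflection t₀ := ⟨π ρ, j, rfl⟩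
    have htt : t₀ * t₀ = 1 := hreflt₀.mul_self
    have haa : cs.simple k * cs.simple k = 1 := cs.simple_mul_simple_self k
    set τ₀ : List B := ρ ++ [j] ++ ρ.reverse with hτ₀
    have hπτ₀ : π τ₀ = t₀ := by
      rw [hτ₀, cs.wordProd_append, cs.wordProd_append, cs.wordProd_singleton,
        cs.wordProd_reverse, ht₀]
    have hword : (k :: ρ) ++ [j] ++ (k :: ρ).reverse = k :: (τ₀ ++ [k]) := by
      simp [hτ₀]
    have ht : π (k :: ρ) * cs.simple j * (π (k :: ρ))⁻¹
        = cs.simple k * t₀ * cs.simple k := by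
      rw [cs.wordProd_cons, mul_inv_rev, cs.inv_simple, ht₀]
      group
    rw [hword, ht, ris_cons, ris_append]
    have hπk : π [k] = cs.simple k := cs.wordProd_singleton k
    set t := cs.simple k * t₀ * cs.simple k with htdef
    set φ : W → W := fun u => (π [k])⁻¹ * u * π [k] with hφ
    have hφt₀ : φ t₀ = t := by rw [hφ, hπk, cs.inv_simple]
    have hφinj : Function.Injective φ := by
      intro u v huv
      simp only [hφ] at huv
      exact mul_left_cancel (mul_right_cancel huv)
    have hcmap : List.count t ((cs.rightInvSeq τ₀).map φ) = List.count t₀ (cs.rightInvSeq τ₀) := by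
      rw [← hφt₀]
      exact List.count_map_of_injective _ φ hφinj t₀
    have hππ : π (τ₀ ++ [k]) = t₀ * cs.simple k := by
      rw [cs.wordProd_append, hπτ₀, hπk]
    have hhead : (π (τ₀ ++ [k]))⁻¹ * cs.simple k * π (τ₀ ++ [k])
        = cs.simple k * t₀⁻¹ * cs.simple k * t₀ * cs.simple k := by
      rw [hππ, mul_inv_rev, cs.inv_simple]
      group
    have ht₀inv : t₀⁻¹ = t₀ := hreflt₀.inv
    rw [List.count_cons, List.count_append, hhead, ht₀inv, cs.rightInvSeq_singleton,
      List.count_singleton', hcmap]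
    simp only [beq_iff_eq]
    have hcond1 : (cs.simple k * t₀ * cs.simple k * t₀ * cs.simple k = t) ↔ t₀ = cs.simple k := by
      rw [htdef]
      exact grp_aux1 haa
    have hcond2 : (cs.simple k = t) ↔ t₀ = cs.simple k := by
      rw [htdef]
      exact grp_aux2 haa
    obtain ⟨c, hc⟩ := ih
    by_cases hcase : t₀ = cs.simple k
    · rw [if_pos (hcond1.mpr hcase), if_pos (hcond2.mpr hcase)]
      exact ⟨c + 1, by omega⟩
    · rw [if_neg (fun h => hcase (hcond1.mp h)), if_neg (fun h => hcase (hcond2.mp h))]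
      exact ⟨c, by omega⟩

/-- Strong exchange property. -/
theorem mem_rightInvSeq_of_isRightInversion {ω : List B} (hω : cs.IsReduced ω) {t : W}
    (ht : cs.IsReflection t) (hlt : cs.length (π ω * t) < cs.length (π ω)) :
    t ∈ cs.rightInvSeq ω := by
  have htt : t * t = 1 := ht.mul_self
  obtain ⟨u, j, huj⟩ := ht
  obtain ⟨ρ, hρ⟩ := cs.wordProd_surjective u
  obtain ⟨σ, hσred, hσ⟩ := cs.exists_reduced_word' (π ω * t)
  set τ : List B := ρ ++ [j] ++ ρ.reverse with hτ
  have hπτ : π τ = t := by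
    rw [hτ, cs.wordProd_append, cs.wordProd_append, cs.wordProd_singleton,
      cs.wordProd_reverse, hρ, ← huj]
  have hw2 : π (σ ++ τ) = π ω := by
    rw [cs.wordProd_append, ← hσ, hπτ, mul_assoc, htt, mul_one]
  have hcount : Odd (List.count t (cs.rightInvSeq (σ ++ τ))) := by
    rw [ris_append, List.count_append]
    have hc0 : List.count t ((cs.rightInvSeq σ).map (fun v => (π τ)⁻¹ * v * π τ)) = 0 := by
      rw [List.count_eq_zero]
      intro hmem
      obtain ⟨v, hv, heq⟩ := List.mem_map.mp hmem
      rw [hπτ] at heq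
      have hveq : v = t := by
        have : v = t * (t⁻¹ * v * t) * t⁻¹ := by group
        rw [heq] at this
        rw [this, mul_inv_cancel_right]
      rw [hveq] at hv
      have hinv := cs.isRightInversion_of_mem_rightInvSeq hσred hv
      have h2 := hinv.2
      rw [← hσ, mul_assoc, htt, mul_one] at h2
      omega
    rw [hc0, zero_add]
    have hodd := count_ris_palindrome_odd cs ρ j
    rw [hρ, ← huj] at hodd
    exact hodd
  have hpar := count_ris_parity cs hw2 t
  have hodd : Odd (List.count t (cs.rightInvSeq ω)) := by
    rcases Nat.even_or_odd (List.count t (cs.rightInvSeq ω)) with he | ho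
    · exfalso
      rw [he.neg_one_pow, hcount.neg_one_pow] at hpar
      exact (by decide : ¬((-1 : ℤˣ) = 1)) hpar
    · exact ho
  have hpos : 0 < List.count t (cs.rightInvSeq ω) := by
    obtain ⟨c, hc⟩ := hodd
    omega
  exact List.count_pos_iff.mp hpos

end StrongExchange


section Peak

theorem getD_ris_eraseIdx (ω : List B) {a b : ℕ} (hab : a < b) (hb : b < ω.length) :
    (cs.rightInvSeq (ω.eraseIdx a)).getD (b - 1) 1 = (cs.rightInvSeq ω).getD b 1 := by
  rw [cs.getD_rightInvSeq, cs.getD_rightInvSeq,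
    (Nat.sub_add_cancel (by omega) : b - 1 + 1 = b), List.eraseIdx_eq_take_drop_succ,
    List.drop_append, List.drop_of_length_le (by simp [hab.le]), List.length_take,
    List.drop_drop, List.nil_append, min_eq_left_of_lt (hab.trans hb), Nat.add_comm,
    ← add_assoc, Nat.sub_add_cancel (by omega), mul_left_inj, mul_right_inj]
  congr 2
  show (List.take a ω ++ List.drop (a + 1) ω)[b - 1]? = ω[b]?
  rw [
    List.getElem?_append_right (by simp [Nat.le_sub_one_of_lt hab]), List.getElem?_drop]
  congr 1
  rw [List.length_take]
  omega

theorem prod_mul_getD_getD (ω : List B) {a b : ℕ} (hab : a < b) (hb : b < ω.length) :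
    π ω * ((cs.rightInvSeq ω).getD a 1) * ((cs.rightInvSeq ω).getD b 1)
      = π ((ω.eraseIdx a).eraseIdx (b - 1)) := by
  calc π ω * ((cs.rightInvSeq ω).getD a 1) * ((cs.rightInvSeq ω).getD b 1)
      = π (ω.eraseIdx a) * ((cs.rightInvSeq ω).getD b 1) := by
        rw [cs.wordProd_mul_getD_rightInvSeq]
    _ = π (ω.eraseIdx a) * ((cs.rightInvSeq (ω.eraseIdx a)).getD (b - 1) 1) := by
        rw [getD_ris_eraseIdx cs ω hab hb]
    _ = π ((ω.eraseIdx a).eraseIdx (b - 1)) := cs.wordProd_mul_getD_rightInvSeq _ _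

theorem peak_lemma {x p q : W} (hp : cs.IsReflection p) (hq : cs.IsReflection q)
    (hpq : p ≠ q) (h1 : cs.length (x * p) < cs.length x) (h2 : cs.length (x * q) < cs.length x) :
    cs.length (x * p * q) < cs.length x ∨ cs.length (x * q * p) < cs.length x := by
  obtain ⟨ω, hωred, hx⟩ := cs.exists_reduced_word' x
  subst hx
  have hpmem := mem_rightInvSeq_of_isRightInversion cs hωred hp h1
  have hqmem := mem_rightInvSeq_of_isRightInversion cs hωred hq h2
  obtain ⟨a, ha, hpa⟩ := List.mem_iff_getElem.mp hpmem
  obtain ⟨b, hb, hqb⟩ := List.mem_iff_getElem.mp hqmem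
  have hpa' : (cs.rightInvSeq ω).getD a 1 = p := by
    rw [List.getD_eq_getElem _ 1 ha]; exact hpa
  have hqb' : (cs.rightInvSeq ω).getD b 1 = q := by
    rw [List.getD_eq_getElem _ 1 hb]; exact hqb
  rw [cs.length_rightInvSeq] at ha hb
  have key : ∀ c d : ℕ, c < d → d < ω.length →
      cs.length (π ω * ((cs.rightInvSeq ω).getD c 1) * ((cs.rightInvSeq ω).getD d 1))
        < cs.length (π ω) := by
    intro c d hcd hd
    rw [prod_mul_getD_getD cs ω hcd hd]
    have e1 : (ω.eraseIdx c).length + 1 = ω.length :=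
      List.length_eraseIdx_add_one (by omega)
    have e2 : ((ω.eraseIdx c).eraseIdx (d - 1)).length + 1 = (ω.eraseIdx c).length :=
      List.length_eraseIdx_add_one (by omega)
    calc cs.length (π ((ω.eraseIdx c).eraseIdx (d - 1)))
        ≤ ((ω.eraseIdx c).eraseIdx (d - 1)).length := cs.length_wordProd_le _
      _ < ω.length := by omega
      _ = cs.length (π ω) := hωred.symm
  rcases Nat.lt_or_ge a b with h | h
  · left
    have := key a b h hb
    rwa [hpa', hqb'] at this
  · have hne : b < a := by
      rcases Nat.lt_or_ge b a with h' | h'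
      · exact h'
      · exfalso
        have : a = b := by omega
        exact hpq (by rw [← hpa', this, hqb'])
    right
    have := key b a hne ha
    rwa [hpa', hqb'] at this

end Peak


section Hurwitz

variable {G : Type*} [Group G]

theorem hm_cons {l l' : List G} (h : HurwitzMove l l') (x : G) :
    HurwitzMove (x :: l) (x :: l') := by
  obtain ⟨a, f, g, b, h1, h2⟩ := h
  refine ⟨x :: a, f, g, b, by simp [h1], ?_⟩
  rcases h2 with h2 | h2
  · left; simp [h2]
  · right; simp [h2]

theorem he_cons {l l' : List G} (h : HurwitzEquiv l l') (x : G) :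
    HurwitzEquiv (x :: l) (x :: l') := by
  induction h with
  | rel a b hab => exact Relation.EqvGen.rel _ _ (hm_cons hab x)
  | refl a => exact Relation.EqvGen.refl _
  | symm a b _ ih => exact Relation.EqvGen.symm _ _ ih
  | trans a b c _ _ ih1 ih2 => exact Relation.EqvGen.trans _ _ _ ih1 ih2

theorem he_append_left (c : List G) {l l' : List G} (h : HurwitzEquiv l l') :
    HurwitzEquiv (c ++ l) (c ++ l') := by
  induction c with
  | nil => simpa using h
  | cons x c ih => simpa using he_cons ih x

theorem hm_length {l l' : List G} (h : HurwitzMove l l') : l.length = l'.length := by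
  obtain ⟨a, f, g, b, h1, h2⟩ := h
  rcases h2 with h2 | h2 <;> subst h1 h2 <;> simp

theorem he_length {l l' : List G} (h : HurwitzEquiv l l') : l.length = l'.length := by
  induction h with
  | rel a b hab => exact hm_length hab
  | refl a => rfl
  | symm a b _ ih => omega
  | trans a b c _ _ ih1 ih2 => omega

theorem hm_prod {l l' : List G} (h : HurwitzMove l l') : l.prod = l'.prod := by
  obtain ⟨a, f, g, b, h1, h2⟩ := h
  rcases h2 with h2 | h2 <;> subst h1 h2 <;> simp [mul_assoc]

theorem he_prod {l l' : List G} (h : HurwitzEquiv l l') : l.prod = l'.prod := by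
  induction h with
  | rel a b hab => exact hm_prod hab
  | refl a => rfl
  | symm a b _ ih => exact ih.symm
  | trans a b c _ _ ih1 ih2 => exact ih1.trans ih2

theorem hm_mem_forward {P : G → Prop} (hP : ∀ u x, P u → P (x * u * x⁻¹))
    {l l' : List G} (h : HurwitzMove l l') (hl : ∀ u ∈ l, P u) : ∀ u ∈ l', P u := by
  obtain ⟨a, f, g, b, h1, h2⟩ := h
  have hf : P f := hl f (by simp [h1])
  have hg : P g := hl g (by simp [h1])
  rcases h2 with h2 | h2 <;> subst h1 h2 <;> intro u hu <;>
    simp only [List.mem_append, List.mem_cons, List.mem_singleton] at hu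
  · rcases hu with (hu | hu | hu | hu) | hu
    · exact hl u (by simp [hu])
    · subst hu; exact hg
    · subst hu
      have := hP f g⁻¹ hf
      rwa [inv_inv] at this
    · exact absurd hu (by simp)
    · exact hl u (by simp [hu])
  · rcases hu with (hu | hu | hu | hu) | hu
    · exact hl u (by simp [hu])
    · subst hu; exact hP g f hg
    · subst hu; exact hf
    · exact absurd hu (by simp)
    · exact hl u (by simp [hu])

theorem hm_mem_backward {P : G → Prop} (hP : ∀ u x, P u → P (x * u * x⁻¹))
    {l l' : List G} (h : HurwitzMove l l') (hl : ∀ u ∈ l', P u) : ∀ u ∈ l, P u := by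
  obtain ⟨a, f, g, b, h1, h2⟩ := h
  rcases h2 with h2 | h2 <;> subst h1 h2 <;> intro u hu <;>
    simp only [List.mem_append, List.mem_cons, List.mem_singleton] at hu
  · have hg : P g := hl g (by simp)
    have hfc : P (g⁻¹ * f * g) := hl _ (by simp)
    rcases hu with (hu | hu | hu | hu) | hu
    · exact hl u (by simp [hu])
    · rw [hu]
      have := hP _ g hfc
      have heq : g * (g⁻¹ * f * g) * g⁻¹ = f := by group
      rwa [heq] at this
    · rw [hu]; exact hg
    · exact absurd hu (by simp)
    · exact hl u (by simp [hu])
  · have hf : P f := hl f (by simp)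
    have hgc : P (f * g * f⁻¹) := hl _ (by simp)
    rcases hu with (hu | hu | hu | hu) | hu
    · exact hl u (by simp [hu])
    · rw [hu]; exact hf
    · rw [hu]
      have := hP _ f⁻¹ hgc
      have heq : f⁻¹ * (f * g * f⁻¹) * f⁻¹⁻¹ = g := by group
      rwa [heq] at this
    · exact absurd hu (by simp)
    · exact hl u (by simp [hu])

theorem he_mem_iff {P : G → Prop} (hP : ∀ u x, P u → P (x * u * x⁻¹))
    {l l' : List G} (h : HurwitzEquiv l l') : (∀ u ∈ l, P u) ↔ (∀ u ∈ l', P u) := by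
  induction h with
  | rel a b hab => exact ⟨hm_mem_forward hP hab, hm_mem_backward hP hab⟩
  | refl a => exact Iff.rfl
  | symm a b _ ih => exact ih.symm
  | trans a b c _ _ ih1 ih2 => exact ih1.trans ih2

theorem hurwitz_pair_pull (c : List G) (t : G) (d : List G) :
    HurwitzEquiv (c ++ [t, t] ++ d)
      ([c.prod * t * c.prod⁻¹, c.prod * t * c.prod⁻¹] ++ (c ++ d)) := by
  induction c with
  | nil =>
    simp only [List.prod_nil, one_mul, inv_one, mul_one, List.nil_append]
    exact Relation.EqvGen.refl _
  | cons x c ih =>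
    set u := c.prod * t * c.prod⁻¹ with hu
    have step1 : HurwitzEquiv ((x :: c) ++ [t, t] ++ d) (x :: ([u, u] ++ (c ++ d))) := by
      have := he_cons ih x
      simpa using this
    have m1 : HurwitzMove (x :: ([u, u] ++ (c ++ d)))
        ((x * u * x⁻¹) :: x :: u :: (c ++ d)) := by
      exact ⟨[], x, u, u :: (c ++ d), by simp, Or.inr (by simp)⟩
    have m2 : HurwitzMove ((x * u * x⁻¹) :: x :: u :: (c ++ d))
        ((x * u * x⁻¹) :: (x * u * x⁻¹) :: x :: (c ++ d)) := by
      exact ⟨[x * u * x⁻¹], x, u, c ++ d, by simp, Or.inr (by simp)⟩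
    have hv : (x :: c).prod * t * (x :: c).prod⁻¹ = x * u * x⁻¹ := by
      rw [hu, List.prod_cons, mul_inv_rev]
      group
    have : HurwitzEquiv ((x :: c) ++ [t, t] ++ d)
        ((x * u * x⁻¹) :: (x * u * x⁻¹) :: x :: (c ++ d)) :=
      Relation.EqvGen.trans _ _ _ step1
        (Relation.EqvGen.trans _ _ _ (Relation.EqvGen.rel _ _ m1) (Relation.EqvGen.rel _ _ m2))
    rw [hv]
    simpa using this

end Hurwitz


section Main

/-- Sum of the Coxeter lengths of all prefix products of `l`, with seed `x`. -/
noncomputable def mu (cs : CoxeterSystem M W) : W → List W → ℕ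
  | x, [] => cs.length x
  | x, t :: r => cs.length x + mu cs (x * t) r

theorem mu_nil (x : W) : mu cs x [] = cs.length x := rfl

theorem mu_cons (x t : W) (r : List W) : mu cs x (t :: r) = cs.length x + mu cs (x * t) r := rfl

theorem mu_append (x : W) (A Bl : List W) :
    mu cs x (A ++ Bl) + cs.length (x * A.prod) = mu cs x A + mu cs (x * A.prod) Bl := by
  induction A generalizing x with
  | nil =>
    rw [List.nil_append, List.prod_nil, mul_one, mu_nil]
    omega
  | cons a A ih =>
    rw [List.cons_append, List.prod_cons, mu_cons, mu_cons]
    have h := ih (x * a)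
    have hx : x * (a * A.prod) = x * a * A.prod := by rw [mul_assoc]
    rw [hx]
    omega

theorem mu_lt_mu {u v u' v' : W} (huv : u' * v' = u * v) (A Bl : List W) (x : W)
    (hlt : cs.length (x * A.prod * u') < cs.length (x * A.prod * u)) :
    mu cs x (A ++ u' :: v' :: Bl) < mu cs x (A ++ u :: v :: Bl) := by
  have h1 := mu_append cs x A (u :: v :: Bl)
  have h2 := mu_append cs x A (u' :: v' :: Bl)
  rw [mu_cons, mu_cons] at h1 h2
  have h3 : x * A.prod * u' * v' = x * A.prod * u * v := by
    rw [mul_assoc, huv, ← mul_assoc]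
  rw [h3] at h2
  omega

theorem claimC (n : ℕ) : ∀ (l : List W), mu cs 1 l ≤ n → l ≠ [] →
    (∀ t ∈ l, cs.IsReflection t) → l.prod = 1 →
    ∃ (c : List W) (t : W) (d : List W), HurwitzEquiv l (c ++ [t, t] ++ d) := by
  induction n using Nat.strong_induction_on with
  | _ n ih =>
  intro l hμ hne hrefl hprod
  obtain ⟨m, hm_mem, hm_max⟩ := Finset.exists_max_image (Finset.range (l.length + 1))
    (fun i => cs.length ((l.take i).prod)) ⟨0, by simp⟩
  simp only [Finset.mem_range] at hm_mem hm_max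
  have hlen1 : 1 ≤ l.length := by
    cases l with
    | nil => exact absurd rfl hne
    | cons a l => simp
  have hP0 : cs.length ((l.take 0).prod) = 0 := by simp
  have hPn : cs.length ((l.take l.length).prod) = 0 := by
    rw [List.take_length, hprod, cs.length_one]
  have hP1pos : 0 < cs.length ((l.take 1).prod) := by
    cases l with
    | nil => exact absurd rfl hne
    | cons a l =>
      have ha : cs.IsReflection a := hrefl a (by simp)
      obtain ⟨c, hc⟩ := ha.odd_length
      simp only [List.take_succ_cons, List.take_zero, List.prod_cons, List.prod_nil, mul_one]
      omega
  have hPm_pos : 0 < cs.length ((l.take m).prod) :=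
    lt_of_lt_of_le hP1pos (hm_max 1 (by omega))
  have hm0 : m ≠ 0 := by
    intro h
    rw [h, hP0] at hPm_pos
    omega
  have hmn : m ≠ l.length := by
    intro h
    rw [h, hPn] at hPm_pos
    omega
  set k := m - 1 with hkdef
  have hk0 : k < l.length := by omega
  have hk1 : k + 1 < l.length := by omega
  set A := l.take k with hA
  set p := l[k]'hk0 with hp
  set q := l[k + 1]'hk1 with hq
  set D := l.drop (k + 2) with hD
  have hAlen : A.length = k := by
    rw [hA, List.length_take]
    omega
  have hdecomp : l = A ++ p :: q :: D := by
    conv_lhs => rw [← List.take_append_drop k l]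
    congr 1
    rw [List.drop_eq_getElem_cons hk0, List.drop_eq_getElem_cons hk1]
  have hid1 : (l.take (k + 1)).prod = A.prod * p := by
    conv_lhs => rw [hdecomp]
    rw [List.take_append, List.take_of_length_le (by rw [hAlen]; omega), hAlen]
    have h : k + 1 - k = 1 := by omega
    rw [h]
    simp
  have hid2 : (l.take (k + 2)).prod = A.prod * p * q := by
    conv_lhs => rw [hdecomp]
    rw [List.take_append, List.take_of_length_le (by rw [hAlen]; omega), hAlen]
    have h : k + 2 - k = 2 := by omega
    rw [h]
    simp [mul_assoc]
  have hidk : (l.take k).prod = A.prod := rfl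
  have hm_eq : m = k + 1 := by omega
  have hrefl_p : cs.IsReflection p := hrefl p (by rw [hdecomp]; simp)
  have hrefl_q : cs.IsReflection q := hrefl q (by rw [hdecomp]; simp)
  have hyx : cs.length A.prod < cs.length (A.prod * p) := by
    have hle := hm_max k (by omega)
    simp only [hm_eq, hid1, hidk] at hle
    have hne' := hrefl_p.length_mul_left_ne A.prod
    omega
  have hxq : cs.length (A.prod * p * q) < cs.length (A.prod * p) := by
    have hle := hm_max (k + 2) (by omega)
    simp only [hm_eq, hid1, hid2] at hle
    have hne' := hrefl_q.length_mul_left_ne (A.prod * p)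
    omega
  by_cases hpq : p = q
  · refine ⟨A, p, D, ?_⟩
    have h : A ++ [p, p] ++ D = A ++ p :: q :: D := by rw [hpq]; simp
    rw [h, ← hdecomp]
    exact Relation.EqvGen.refl _
  · have hxp : cs.length (A.prod * p * p) < cs.length (A.prod * p) := by
      rw [mul_assoc, hrefl_p.mul_self, mul_one]
      exact hyx
    have hpk := peak_lemma cs hrefl_p hrefl_q hpq hxp hxq
    rcases hpk with hcase | hcase
    · set l' := A ++ q :: (q⁻¹ * p * q) :: D with hl'
      have hmv : HurwitzMove l l' :=
        ⟨A, p, q, D, by rw [hdecomp]; simp, Or.inl (by rw [hl']; simp)⟩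
      have hlt : cs.length (1 * A.prod * q) < cs.length (1 * A.prod * p) := by
        rw [one_mul]
        have h2 : A.prod * p * p * q = A.prod * q := by
          rw [mul_assoc A.prod p p, hrefl_p.mul_self, mul_one]
        rw [h2] at hcase
        exact hcase
      have hmu : mu cs 1 l' < mu cs 1 l := by
        rw [hl']
        conv_rhs => rw [hdecomp]
        exact mu_lt_mu cs (by group) A D 1 hlt
      have hrefl' : ∀ t ∈ l', cs.IsReflection t :=
        hm_mem_forward (fun u z hu => hu.conj z) hmv hrefl
      have hprod' : l'.prod = 1 := by rw [← hm_prod hmv]; exact hprod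
      have hne' : l' ≠ [] := by
        rw [hl']
        intro h
        have := congrArg List.length h
        simp at this
      obtain ⟨c, t, d, he⟩ := ih (mu cs 1 l') (by omega) l' le_rfl hne' hrefl' hprod'
      exact ⟨c, t, d, Relation.EqvGen.trans _ _ _ (Relation.EqvGen.rel _ _ hmv) he⟩
    · set l' := A ++ (p * q * p⁻¹) :: p :: D with hl'
      have hmv : HurwitzMove l l' :=
        ⟨A, p, q, D, by rw [hdecomp]; simp, Or.inr (by rw [hl']; simp)⟩
      have hlt : cs.length (1 * A.prod * (p * q * p⁻¹)) < cs.length (1 * A.prod * p) := by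
        rw [one_mul]
        have h2 : A.prod * (p * q * p⁻¹) = A.prod * p * q * p := by
          rw [hrefl_p.inv]
          simp [mul_assoc]
        rw [h2]
        exact hcase
      have hmu : mu cs 1 l' < mu cs 1 l := by
        rw [hl']
        conv_rhs => rw [hdecomp]
        exact mu_lt_mu cs (by group) A D 1 hlt
      have hrefl' : ∀ t ∈ l', cs.IsReflection t :=
        hm_mem_forward (fun u z hu => hu.conj z) hmv hrefl
      have hprod' : l'.prod = 1 := by rw [← hm_prod hmv]; exact hprod
      have hne' : l' ≠ [] := by
        rw [hl']
        intro h
        have := congrArg List.length h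
        simp at this
      obtain ⟨c, t, d, he⟩ := ih (mu cs 1 l') (by omega) l' le_rfl hne' hrefl' hprod'
      exact ⟨c, t, d, Relation.EqvGen.trans _ _ _ (Relation.EqvGen.rel _ _ hmv) he⟩

theorem main_aux (n : ℕ) : ∀ (l : List W), l.length ≤ n →
    (∀ t ∈ l, cs.IsReflection t) → l.prod = 1 →
    Even l.length ∧ ∃ ts : List W, (∀ t ∈ ts, cs.IsReflection t) ∧
      HurwitzEquiv l (ts.flatMap fun t => [t, t]) := by
  induction n using Nat.strong_induction_on with
  | _ n ih =>
  intro l hlen hrefl hprod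
  rcases eq_or_ne l [] with rfl | hne
  · exact ⟨by simp, [], by simp, Relation.EqvGen.refl _⟩
  · obtain ⟨c, t, d, he⟩ := claimC cs (mu cs 1 l) l le_rfl hne hrefl hprod
    have hreflconj : ∀ (u z : W), cs.IsReflection u → cs.IsReflection (z * u * z⁻¹) :=
      fun u z hu => hu.conj z
    have hrefl2 : ∀ u ∈ c ++ [t, t] ++ d, cs.IsReflection u := (he_mem_iff hreflconj he).mp hrefl
    have hreflt : cs.IsReflection t := hrefl2 t (by simp)
    have hlen2 : l.length = c.length + 2 + d.length := by
      have h := he_length he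
      rw [List.length_append, List.length_append] at h
      simp only [List.length_cons, List.length_nil] at h
      omega
    have hprod2 : (c ++ [t, t] ++ d).prod = 1 := by rw [← he_prod he]; exact hprod
    have hprodcd : (c ++ d).prod = 1 := by
      rw [List.prod_append, List.prod_append, List.prod_cons, List.prod_cons,
        List.prod_nil] at hprod2
      have htt : t * (t * (1 : W)) = 1 := by rw [mul_one]; exact hreflt.mul_self
      rw [htt, mul_one] at hprod2
      rw [List.prod_append]
      exact hprod2
    have hrefl_cd : ∀ v ∈ c ++ d, cs.IsReflection v := by
      intro v hv
      rcases List.mem_append.mp hv with h | h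
      · exact hrefl2 v (by simp [h])
      · exact hrefl2 v (by simp [h])
    have hlencd : (c ++ d).length ≤ c.length + d.length := by simp
    obtain ⟨hev, ts, hts, hets⟩ := ih (c.length + d.length) (by omega) (c ++ d)
      hlencd hrefl_cd hprodcd
    have hevl : (c ++ d).length = c.length + d.length := by simp
    refine ⟨?_, (c.prod * t * c.prod⁻¹) :: ts, ?_, ?_⟩
    · rw [hevl] at hev
      obtain ⟨r, hr⟩ := hev
      exact ⟨r + 1, by omega⟩
    · intro v hv
      rcases List.mem_cons.mp hv with h | h
      · rw [h]; exact hreflt.conj c.prod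
      · exact hts v h
    · have hpull := hurwitz_pair_pull c t d
      have step3 : HurwitzEquiv
          ([c.prod * t * c.prod⁻¹, c.prod * t * c.prod⁻¹] ++ (c ++ d))
          ([c.prod * t * c.prod⁻¹, c.prod * t * c.prod⁻¹] ++ ts.flatMap fun t => [t, t]) :=
        he_append_left _ hets
      have hflat : ((c.prod * t * c.prod⁻¹) :: ts).flatMap (fun t => [t, t])
          = [c.prod * t * c.prod⁻¹, c.prod * t * c.prod⁻¹] ++ ts.flatMap fun t => [t, t] := by
        simp [List.flatMap_cons]
      rw [hflat]
      exact Relation.EqvGen.trans _ _ _ he (Relation.EqvGen.trans _ _ _ hpull step3)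

end Main

end HurwitzCox


/-- **Hurwitz problem in Coxeter–Weyl groups.** Let `t₁ ⋅ t₂ ⋅ … ⋅ t_l` be a
factorisation of the identity of a Coxeter group `W` into quasireflections. Then `l` is
even and the factorisation is Hurwitz equivalent to a factorisation `t′₁ ⋅ … ⋅ t′_l` into
squares of quasireflections, i.e. with `t′_{2i−1} = t′_{2i}` for every `i`. -/
theorem hurwitz_problem_coxeter
    {B : Type*} {W : Type*} [Group W] {M : CoxeterMatrix B} (cs : CoxeterSystem M W)
    (l : List W) (hrefl : ∀ t ∈ l, cs.IsReflection t) (hprod : l.prod = 1) :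
    Even l.length ∧
      ∃ ts : List W, (∀ t ∈ ts, cs.IsReflection t) ∧
        HurwitzEquiv l (ts.flatMap fun t => [t, t]) := by
  classical
  exact HurwitzCox.main_aux cs l.length l le_rfl hrefl hprod
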